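/- Let x_1,…,x_n be points in ℝ^p, let h ≤ n, and let H_1 ⊆ {1,…,n} with |H_1| = h. Let m_1, S_1 be the mean and sample covariance of the points indexed by H_1, let T be a symmetric positive definite p×p matrix, let ρ ∈ (0,1], and set K_1 = ρT + (1−ρ)S_1. Define d_1(i) = (x_i − m_1)' K_1^{-1} (x_i − m_1). If H_2 is a set of indices of h smallest values among d_1(1),…,d_1(n), and m_2, S_2, K_2 = ρT + (1−ρ)S_2 are computed from H_2, then det(K_2) ≤ det(K_1). -/

import Mathlib

open Matrix BigOperators


lemma psd_smul' {p : ℕ} {M : Matrix (Fin p) (Fin p) ℝ} (hM : M.PosSemidef) {c : ℝ} (hc : 0 ≤ c) :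
    (c • M).PosSemidef := by
  refine Matrix.PosSemidef.of_dotProduct_mulVec_nonneg ?_ fun x => ?_
  · have := hM.1
    simp only [Matrix.IsHermitian, conjTranspose_smul, star_trivial]
    rw [this]
  · rw [smul_mulVec, dotProduct_smul, smul_eq_mul]
    exact mul_nonneg hc (hM.dotProduct_mulVec_nonneg x)

lemma pd_smul' {p : ℕ} {M : Matrix (Fin p) (Fin p) ℝ} (hM : M.PosDef) {c : ℝ} (hc : 0 < c) :
    (c • M).PosDef := by
  refine Matrix.PosDef.of_dotProduct_mulVec_pos ?_ fun x hx => ?_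
  · have := hM.1
    simp only [Matrix.IsHermitian, conjTranspose_smul, star_trivial]
    rw [this]
  · rw [smul_mulVec, dotProduct_smul, smul_eq_mul]
    exact mul_pos hc (hM.dotProduct_mulVec_pos hx)

lemma psd_vecMulVec {p : ℕ} (v : Fin p → ℝ) : (vecMulVec v v).PosSemidef := by
  refine Matrix.PosSemidef.of_dotProduct_mulVec_nonneg ?_ fun x => ?_
  · ext i j
    simp [vecMulVec_apply, conjTranspose_apply, mul_comm]
  · have hval : star x ⬝ᵥ (vecMulVec v v *ᵥ x) = (v ⬝ᵥ x) ^ 2 := by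
      simp only [star_trivial, dotProduct, mulVec, vecMulVec_apply, Finset.mul_sum, sq,
        Finset.sum_mul]
      exact Finset.sum_congr rfl fun i _ => Finset.sum_congr rfl fun j _ => by ring
    rw [hval]
    positivity

lemma psd_sum' {p : ℕ} {ι : Type*} (s : Finset ι) (f : ι → Matrix (Fin p) (Fin p) ℝ)
    (hf : ∀ i ∈ s, (f i).PosSemidef) : (∑ i ∈ s, f i).PosSemidef := by
  induction s using Finset.cons_induction with
  | empty => simpa using Matrix.PosSemidef.zero
  | cons a s ha ih =>
    rw [Finset.sum_cons]
    exact (hf a (Finset.mem_cons_self a s)).add (ih fun i hi => hf i (Finset.mem_cons_of_mem hi))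

lemma trace_mul_vecMulVec {p : ℕ} (A : Matrix (Fin p) (Fin p) ℝ) (u : Fin p → ℝ) :
    (A * vecMulVec u u).trace = u ⬝ᵥ (A *ᵥ u) := by
  simp only [Matrix.trace, Matrix.diag, Matrix.mul_apply, vecMulVec_apply, dotProduct, mulVec,
    Finset.mul_sum]
  exact Finset.sum_congr rfl fun i _ => Finset.sum_congr rfl fun j _ => by ring


lemma trace_eq_sum_eigs' {p : ℕ} {A : Matrix (Fin p) (Fin p) ℝ} (hA : A.IsHermitian) :
    A.trace = ∑ i, hA.eigenvalues i := by
  conv_lhs => rw [hA.spectral_theorem, Unitary.conjStarAlgAut_apply]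
  rw [Matrix.trace_mul_cycle]
  have hU : (star (hA.eigenvectorUnitary : Matrix (Fin p) (Fin p) ℝ)) *
      (hA.eigenvectorUnitary : Matrix (Fin p) (Fin p) ℝ) = 1 :=
    Matrix.UnitaryGroup.star_mul_self _
  rw [hU, Matrix.one_mul, Matrix.trace_diagonal]
  simp

lemma det_le_one_of_trace_le' {p : ℕ} {N : Matrix (Fin p) (Fin p) ℝ} (hN : N.PosSemidef)
    (htr : N.trace ≤ (p : ℝ)) : N.det ≤ 1 := by
  rcases Nat.eq_zero_or_pos p with hp | hp
  · subst hp
    simp [Matrix.det_fin_zero]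
  · set lam := hN.1.eigenvalues with hlam
    have hnn : ∀ i, 0 ≤ lam i := hN.eigenvalues_nonneg
    have hdet : N.det = ∏ i, lam i := by
      have := hN.1.det_eq_prod_eigenvalues
      simpa using this
    have htr' : ∑ i, lam i ≤ (p : ℝ) := by
      rw [← trace_eq_sum_eigs' hN.1]; exact htr
    have hp' : (0 : ℝ) < p := by exact_mod_cast hp
    have hamgm : ∏ i, lam i ^ ((p : ℝ)⁻¹) ≤ ∑ i, (p : ℝ)⁻¹ * lam i := by
      apply Real.geom_mean_le_arith_mean_weighted
      · intro i _; positivity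
      · simp [Finset.sum_const, Finset.card_univ]
        field_simp
      · intro i _; exact hnn i
    have hsum : ∑ i, (p : ℝ)⁻¹ * lam i ≤ 1 := by
      rw [← Finset.mul_sum]
      rw [inv_mul_le_iff₀ hp']
      linarith
    have hprod_le : ∏ i, lam i ^ ((p : ℝ)⁻¹) ≤ 1 := hamgm.trans hsum
    have hprod_nn : 0 ≤ ∏ i, lam i ^ ((p : ℝ)⁻¹) :=
      Finset.prod_nonneg fun i _ => Real.rpow_nonneg (hnn i) _
    have hkey : (∏ i, lam i ^ ((p : ℝ)⁻¹)) ^ p = ∏ i, lam i := by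
      rw [← Finset.prod_pow]
      refine Finset.prod_congr rfl fun i _ => ?_
      rw [← Real.rpow_natCast (lam i ^ ((p : ℝ)⁻¹)) p, ← Real.rpow_mul (hnn i),
        inv_mul_cancel₀ (ne_of_gt hp'), Real.rpow_one]
    calc N.det = (∏ i, lam i ^ ((p : ℝ)⁻¹)) ^ p := by rw [hdet, hkey]
    _ ≤ 1 := pow_le_one₀ hprod_nn hprod_le

open scoped MatrixOrder

lemma det_le_det_of_trace_le' {p : ℕ} {A B : Matrix (Fin p) (Fin p) ℝ}
    (hA : A.PosDef) (hB : B.PosDef) (htr : (A⁻¹ * B).trace ≤ (p : ℝ)) : B.det ≤ A.det := by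
  set R := CFC.sqrt A with hRdef
  have hR : R * R = A := CFC.sqrt_mul_sqrt_self A hA.posSemidef.nonneg
  have hRpsd : R.PosSemidef := (CFC.sqrt_nonneg A).posSemidef
  have hAdet : 0 < A.det := hA.det_pos
  have hRdet : R.det * R.det = A.det := by rw [← Matrix.det_mul, hR]
  have hRdet0 : R.det ≠ 0 := by
    intro h0
    rw [h0, mul_zero] at hRdet
    exact hAdet.ne (hRdet)
  have hRinvh : R⁻¹.IsHermitian := hRpsd.1.inv
  have hNpsd : (R⁻¹ * B * R⁻¹).PosSemidef := by
    have := hB.posSemidef.mul_mul_conjTranspose_same R⁻¹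
    rwa [hRinvh.eq] at this
  have hNtr : (R⁻¹ * B * R⁻¹).trace = (A⁻¹ * B).trace := by
    rw [Matrix.trace_mul_cycle, ← Matrix.mul_inv_rev, hR]
  have hNdet : (R⁻¹ * B * R⁻¹).det = B.det / A.det := by
    rw [Matrix.det_mul, Matrix.det_mul, Matrix.det_nonsing_inv, Ring.inverse_eq_inv', ← hRdet]
    field_simp
  have h1 : (R⁻¹ * B * R⁻¹).det ≤ 1 := det_le_one_of_trace_le' hNpsd (by rw [hNtr]; exact htr)
  rw [hNdet, div_le_one hAdet] at h1
  exact h1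



lemma sum_dotProduct'' {p : ℕ} {ι : Type*} (s : Finset ι) (f : ι → Fin p → ℝ) (w : Fin p → ℝ) :
    (∑ i ∈ s, f i) ⬝ᵥ w = ∑ i ∈ s, f i ⬝ᵥ w := by
  simp only [dotProduct, Finset.sum_apply, Finset.sum_mul]
  exact Finset.sum_comm

lemma dotProduct_sum'' {p : ℕ} {ι : Type*} (s : Finset ι) (w : Fin p → ℝ) (f : ι → Fin p → ℝ) :
    w ⬝ᵥ (∑ i ∈ s, f i) = ∑ i ∈ s, w ⬝ᵥ f i := by
  simp only [dotProduct, Finset.sum_apply, Finset.mul_sum]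
  exact Finset.sum_comm

lemma mulVec_sum'' {p : ℕ} {ι : Type*} (s : Finset ι) (A : Matrix (Fin p) (Fin p) ℝ)
    (f : ι → Fin p → ℝ) : A *ᵥ (∑ i ∈ s, f i) = ∑ i ∈ s, A *ᵥ f i := by
  ext j
  simp only [mulVec, dotProduct, Finset.sum_apply, Finset.mul_sum]
  exact Finset.sum_comm

lemma sum_smallest_le' {n : ℕ} (d : Fin n → ℝ) (H₁ H₂ : Finset (Fin n))
    (hcard : H₂.card = H₁.card)
    (hsmall : ∀ i ∈ H₂, ∀ j ∉ H₂, d i ≤ d j) :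
    ∑ i ∈ H₂, d i ≤ ∑ i ∈ H₁, d i := by
  have hsplit2 : ∑ i ∈ H₂, d i = ∑ i ∈ H₂ ∩ H₁, d i + ∑ i ∈ H₂ \ H₁, d i := by
    rw [← Finset.sum_inter_add_sum_sdiff]
  have hsplit1 : ∑ i ∈ H₁, d i = ∑ i ∈ H₂ ∩ H₁, d i + ∑ i ∈ H₁ \ H₂, d i := by
    rw [Finset.inter_comm, ← Finset.sum_inter_add_sum_sdiff]
  have hcard' : (H₂ \ H₁).card = (H₁ \ H₂).card := by
    have c2 := Finset.card_inter_add_card_sdiff H₂ H₁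
    have c1 := Finset.card_inter_add_card_sdiff H₁ H₂
    rw [Finset.inter_comm] at c1
    omega
  rw [hsplit1, hsplit2]
  gcongr ?_ + ?_
  · exact le_rfl
  · rcases Finset.eq_empty_or_nonempty (H₁ \ H₂) with he | hne
    · have he2 : H₂ \ H₁ = ∅ := Finset.card_eq_zero.mp (by rw [hcard', he]; simp)
      simp [he, he2]
    · obtain ⟨j₀, hj₀mem, hj₀min⟩ := Finset.exists_min_image (H₁ \ H₂) d hne
      have hj₀notin : j₀ ∉ H₂ := (Finset.mem_sdiff.mp hj₀mem).2
      calc ∑ i ∈ H₂ \ H₁, d i ≤ (H₂ \ H₁).card • d j₀ := by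
            apply Finset.sum_le_card_nsmul
            intro i hi
            exact hsmall i (Finset.mem_sdiff.mp hi).1 j₀ hj₀notin
      _ = (H₁ \ H₂).card • d j₀ := by rw [hcard']
      _ ≤ ∑ i ∈ H₁ \ H₂, d i := Finset.card_nsmul_le_sum _ _ _ fun i hi => hj₀min i hi

lemma mean_min' {n p : ℕ} (x : Fin n → Fin p → ℝ) (H : Finset (Fin n)) (h : ℕ)
    (hh : 0 < h) (hcard : H.card = h) (A : Matrix (Fin p) (Fin p) ℝ) (hA : A.PosSemidef)
    (m₂ m₁ : Fin p → ℝ) (hm₂ : m₂ = (h : ℝ)⁻¹ • ∑ i ∈ H, x i) :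
    ∑ i ∈ H, (x i - m₂) ⬝ᵥ (A *ᵥ (x i - m₂)) ≤ ∑ i ∈ H, (x i - m₁) ⬝ᵥ (A *ᵥ (x i - m₁)) := by
  have hhne : (h : ℝ) ≠ 0 := Nat.cast_ne_zero.mpr hh.ne'
  set c : Fin p → ℝ := m₂ - m₁ with hc
  have hzero : ∑ i ∈ H, (x i - m₂) = 0 := by
    rw [Finset.sum_sub_distrib, Finset.sum_const, hcard, hm₂, ← Nat.cast_smul_eq_nsmul ℝ,
      smul_smul, mul_inv_cancel₀ hhne, one_smul, sub_self]
  have hexp : ∀ i, (x i - m₁) ⬝ᵥ (A *ᵥ (x i - m₁))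
      = (x i - m₂) ⬝ᵥ (A *ᵥ (x i - m₂)) + (x i - m₂) ⬝ᵥ (A *ᵥ c)
        + c ⬝ᵥ (A *ᵥ (x i - m₂)) + c ⬝ᵥ (A *ᵥ c) := by
    intro i
    have hi : x i - m₁ = (x i - m₂) + c := by rw [hc]; abel
    rw [hi, mulVec_add, dotProduct_add, add_dotProduct, add_dotProduct]
    ring
  have hsum1 : ∑ i ∈ H, (x i - m₂) ⬝ᵥ (A *ᵥ c) = 0 := by
    rw [← sum_dotProduct'', hzero, zero_dotProduct]
  have hsum2 : ∑ i ∈ H, c ⬝ᵥ (A *ᵥ (x i - m₂)) = 0 := by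
    rw [← dotProduct_sum'', ← mulVec_sum'', hzero]
    simp
  have hcnn : 0 ≤ c ⬝ᵥ (A *ᵥ c) := by simpa using hA.dotProduct_mulVec_nonneg c
  calc ∑ i ∈ H, (x i - m₂) ⬝ᵥ (A *ᵥ (x i - m₂))
      ≤ ∑ i ∈ H, (x i - m₂) ⬝ᵥ (A *ᵥ (x i - m₂)) + H.card • (c ⬝ᵥ (A *ᵥ c)) := by
        have : (0:ℝ) ≤ H.card • (c ⬝ᵥ (A *ᵥ c)) := nsmul_nonneg hcnn _
        linarith
  _ = ∑ i ∈ H, (x i - m₁) ⬝ᵥ (A *ᵥ (x i - m₁)) := by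
        rw [Finset.sum_congr rfl fun i _ => hexp i]
        rw [Finset.sum_add_distrib, Finset.sum_add_distrib, Finset.sum_add_distrib, hsum1, hsum2,
          Finset.sum_const]
        simp only [add_zero]

/-- The C-step actually used in the MRCD algorithm: taking the `h` observations
with smallest regularized Mahalanobis distances does not increase the
determinant of the regularized covariance matrix. -/
theorem mrcd_algorithm_C_step {n p : ℕ} (x : Fin n → (Fin p → ℝ)) (h : ℕ)
    (hh : 0 < h) (hhn : h ≤ n)
    (T : Matrix (Fin p) (Fin p) ℝ) (hT : T.PosDef)
    (ρ : ℝ) (hρ : ρ ∈ Set.Ioc (0 : ℝ) 1)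
    (H₁ H₂ : Finset (Fin n)) (hH₁ : H₁.card = h) (hH₂ : H₂.card = h)
    (m₁ m₂ : Fin p → ℝ) (S₁ S₂ K₁ K₂ : Matrix (Fin p) (Fin p) ℝ)
    (hm₁ : m₁ = (h : ℝ)⁻¹ • ∑ i ∈ H₁, x i)
    (hS₁ : S₁ = (h : ℝ)⁻¹ • ∑ i ∈ H₁, vecMulVec (x i - m₁) (x i - m₁))
    (hK₁ : K₁ = ρ • T + (1 - ρ) • S₁)
    (d₁ : Fin n → ℝ)
    (hd₁ : ∀ i, d₁ i = (x i - m₁) ⬝ᵥ (K₁⁻¹ *ᵥ (x i - m₁)))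
    (hsmall : ∀ i ∈ H₂, ∀ j ∉ H₂, d₁ i ≤ d₁ j)
    (hm₂ : m₂ = (h : ℝ)⁻¹ • ∑ i ∈ H₂, x i)
    (hS₂ : S₂ = (h : ℝ)⁻¹ • ∑ i ∈ H₂, vecMulVec (x i - m₂) (x i - m₂))
    (hK₂ : K₂ = ρ • T + (1 - ρ) • S₂) :
    K₂.det ≤ K₁.det := by
  obtain ⟨hρ0, hρ1⟩ := hρ
  have hhne : (h : ℝ) ≠ 0 := Nat.cast_ne_zero.mpr hh.ne'
  have hhinv : (0 : ℝ) ≤ (h : ℝ)⁻¹ := by positivity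
  have h1ρ : (0 : ℝ) ≤ 1 - ρ := by linarith
  have hS₁psd : S₁.PosSemidef := by
    rw [hS₁]
    exact psd_smul' (psd_sum' _ _ fun i _ => psd_vecMulVec _) hhinv
  have hS₂psd : S₂.PosSemidef := by
    rw [hS₂]
    exact psd_smul' (psd_sum' _ _ fun i _ => psd_vecMulVec _) hhinv
  have hK₁pd : K₁.PosDef := by
    rw [hK₁]
    exact (pd_smul' hT hρ0).add_posSemidef (psd_smul' hS₁psd h1ρ)
  have hK₂pd : K₂.PosDef := by
    rw [hK₂]
    exact (pd_smul' hT hρ0).add_posSemidef (psd_smul' hS₂psd h1ρ)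
  have hK₁det : K₁.det ≠ 0 := hK₁pd.det_pos.ne'
  -- expansion of traces
  have expand : ∀ S : Matrix (Fin p) (Fin p) ℝ,
      (K₁⁻¹ * (ρ • T + (1 - ρ) • S)).trace
        = ρ * (K₁⁻¹ * T).trace + (1 - ρ) * (K₁⁻¹ * S).trace := by
    intro S
    rw [Matrix.mul_add, Matrix.mul_smul, Matrix.mul_smul, Matrix.trace_add, Matrix.trace_smul,
      Matrix.trace_smul, smul_eq_mul, smul_eq_mul]
  have key : ∀ (H : Finset (Fin n)) (m : Fin p → ℝ),
      (K₁⁻¹ * ((h : ℝ)⁻¹ • ∑ i ∈ H, vecMulVec (x i - m) (x i - m))).trace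
        = (h : ℝ)⁻¹ * ∑ i ∈ H, (x i - m) ⬝ᵥ (K₁⁻¹ *ᵥ (x i - m)) := by
    intro H m
    rw [Matrix.mul_smul, Matrix.trace_smul, smul_eq_mul, Finset.mul_sum, Matrix.trace_sum]
    congr 1
    exact Finset.sum_congr rfl fun i _ => trace_mul_vecMulVec _ _
  have htrK₁ : (K₁⁻¹ * K₁).trace = (p : ℝ) := by
    rw [Matrix.nonsing_inv_mul _ hK₁det.isUnit, Matrix.trace_one]
    simp
  have e1 : (p : ℝ) = ρ * (K₁⁻¹ * T).trace + (1 - ρ) * ((h : ℝ)⁻¹ * ∑ i ∈ H₁, d₁ i) := by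
    rw [← htrK₁]
    nth_rewrite 2 [hK₁]
    rw [expand, hS₁, key]
    congr 2
    exact congrArg _ (Finset.sum_congr rfl fun i _ => (hd₁ i).symm)
  have e2 : (K₁⁻¹ * K₂).trace
      = ρ * (K₁⁻¹ * T).trace
        + (1 - ρ) * ((h : ℝ)⁻¹ * ∑ i ∈ H₂, (x i - m₂) ⬝ᵥ (K₁⁻¹ *ᵥ (x i - m₂))) := by
    rw [hK₂, expand, hS₂, key]
  have step1 : ∑ i ∈ H₂, (x i - m₂) ⬝ᵥ (K₁⁻¹ *ᵥ (x i - m₂)) ≤ ∑ i ∈ H₂, d₁ i := by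
    have := mean_min' x H₂ h hh hH₂ K₁⁻¹ hK₁pd.inv.posSemidef m₂ m₁ hm₂
    calc ∑ i ∈ H₂, (x i - m₂) ⬝ᵥ (K₁⁻¹ *ᵥ (x i - m₂))
        ≤ ∑ i ∈ H₂, (x i - m₁) ⬝ᵥ (K₁⁻¹ *ᵥ (x i - m₁)) := this
    _ = ∑ i ∈ H₂, d₁ i := Finset.sum_congr rfl fun i _ => (hd₁ i).symm
  have step2 : ∑ i ∈ H₂, d₁ i ≤ ∑ i ∈ H₁, d₁ i :=
    sum_smallest_le' d₁ H₁ H₂ (by rw [hH₁, hH₂]) hsmall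
  have htr : (K₁⁻¹ * K₂).trace ≤ (p : ℝ) := by
    rw [e2, e1]
    have hle : ∑ i ∈ H₂, (x i - m₂) ⬝ᵥ (K₁⁻¹ *ᵥ (x i - m₂)) ≤ ∑ i ∈ H₁, d₁ i :=
      step1.trans step2
    have := mul_le_mul_of_nonneg_left (mul_le_mul_of_nonneg_left hle hhinv) h1ρ
    linarith
  exact det_le_det_of_trace_le' hK₁pd hK₂pd htr
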